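/- For all reals 0 < a ≤ b there exists a constant C > 0 such that for every s ∈ ℂ with a ≤ Re(s) ≤ b and |Im(s)| ≥ 1, one has |Γ(s) · cos(πs/2)| ≤ C · |s|^{Re(s) − 1/2}. -/

import Mathlib

open Complex Real

open Filter ComplexConjugate Topology

noncomputable section

/-- `ff t x = log(1 + t^2/x^2)` written as a difference of logs. -/
def ff (t x : ℝ) : ℝ := Real.log (x^2 + t^2) - 2 * Real.log x

/-- antiderivative of `ff t`. -/
def FF (t x : ℝ) : ℝ := x * (Real.log (x^2 + t^2) - 2 * Real.log x) + 2 * t * Real.arctan (x / t)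

lemma ff_nonneg {t x : ℝ} (hx : 0 < x) : 0 ≤ ff t x := by
  have h : Real.log (x^2) ≤ Real.log (x^2 + t^2) :=
    Real.log_le_log (by positivity) (by nlinarith [sq_nonneg t])
  have h2 : Real.log (x^2) = 2 * Real.log x := by
    rw [Real.log_pow]; push_cast; ring
  unfold ff; linarith [h, h2.symm.le]

lemma hasDerivAt_ff {t x : ℝ} (hx : 0 < x) :
    HasDerivAt (ff t) (2*x/(x^2 + t^2) - 2/x) x := by
  have h1 : HasDerivAt (fun x : ℝ => x^2 + t^2) (2*x) x := by
    simpa using ((hasDerivAt_pow 2 x).add_const (t^2))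
  have h2 : HasDerivAt (fun x : ℝ => Real.log (x^2 + t^2)) (2*x/(x^2+t^2)) x :=
    h1.log (by positivity)
  have h3 : HasDerivAt (fun x : ℝ => 2 * Real.log x) (2 * x⁻¹) x :=
    (Real.hasDerivAt_log hx.ne').const_mul 2
  have := h2.sub h3
  exact this.congr_deriv (by ring)


lemma hasDerivAt_FF {t x : ℝ} (hx : 0 < x) (ht : 0 < t) :
    HasDerivAt (FF t) (ff t x) x := by
  have h1 : HasDerivAt (fun x : ℝ => x * (Real.log (x^2 + t^2) - 2 * Real.log x))
      (1 * (Real.log (x^2 + t^2) - 2 * Real.log x) + x * (2*x/(x^2 + t^2) - 2/x)) x :=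
    (hasDerivAt_id x).mul (hasDerivAt_ff hx)
  have h2 : HasDerivAt (fun x : ℝ => Real.arctan (x / t)) ((1 + (x/t)^2)⁻¹ * (1/t)) x := by
    have := (Real.hasDerivAt_arctan (x / t)).comp x ((hasDerivAt_id x).div_const t)
    exact this.congr_deriv (by ring)
  have h3 := h1.add (h2.const_mul (2*t))
  refine h3.congr_deriv ?_
  unfold ff
  have hx2 : x^2 + t^2 > 0 := by positivity
  field_simp
  ring

lemma convexOn_ff (t : ℝ) : ConvexOn ℝ (Set.Ioi 0) (ff t) := by
  have hint : interior (Set.Ioi (0:ℝ)) = Set.Ioi 0 := interior_Ioi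
  have hderiv : ∀ x ∈ Set.Ioi (0:ℝ), deriv (ff t) x = 2*x/(x^2 + t^2) - 2/x :=
    fun x hx => (hasDerivAt_ff hx).deriv
  refine MonotoneOn.convexOn_of_deriv (convex_Ioi 0) ?_ ?_ ?_
  · exact fun x hx => ((hasDerivAt_ff hx).continuousAt).continuousWithinAt
  · rw [hint]; exact fun x hx => ((hasDerivAt_ff hx).differentiableAt).differentiableWithinAt
  · rw [hint]
    intro x hx y hy hxy
    rw [hderiv x hx, hderiv y hy]
    have hx : (0:ℝ) < x := hx
    have hy : (0:ℝ) < y := hy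
    have h1 : (0:ℝ) < x^2 + t^2 := by positivity
    have h2 : (0:ℝ) < y^2 + t^2 := by positivity
    have key : x*(x^2+t^2) ≤ y*(y^2+t^2) := by nlinarith [mul_le_mul_of_nonneg_left hxy (sq_nonneg t), pow_le_pow_left₀ hx.le hxy 3]
    have key2 := mul_le_mul_of_nonneg_left key (sq_nonneg t)
    rw [div_sub_div _ _ h1.ne' hx.ne', div_sub_div _ _ h2.ne' hy.ne',
      div_le_div_iff₀ (by positivity) (by positivity)]
    nlinarith [key2]

/-- trapezoid estimate -/
lemma trap {t p : ℝ} (ht : 0 < t) (hp : 0 < p) :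
    FF t (p+1) - FF t p ≤ (ff t p + ff t (p+1))/2 := by
  have hsub : Set.uIcc p (p+1) ⊆ Set.Ioi (0:ℝ) := by
    rw [Set.uIcc_of_le (by linarith)]
    intro x hx; exact lt_of_lt_of_le hp hx.1
  have hcont : ContinuousOn (ff t) (Set.uIcc p (p+1)) :=
    fun x hx => ((hasDerivAt_ff (hsub hx)).continuousAt).continuousWithinAt
  have hFTC : ∫ y in p..(p+1), ff t y = FF t (p+1) - FF t p := by
    refine intervalIntegral.integral_eq_sub_of_hasDerivAt (fun x hx => hasDerivAt_FF (hsub hx) ht) ?_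
    exact hcont.intervalIntegrable
  rw [← hFTC]
  have hchord : ∀ x ∈ Set.Icc p (p+1), ff t x ≤ ff t p + (ff t (p+1) - ff t p) * (x - p) := by
    intro x hx
    have hconv := convexOn_ff t
    have h := hconv.2 (Set.mem_Ioi.mpr hp) (Set.mem_Ioi.mpr (show (0:ℝ) < p + 1 by linarith))
      (show (0:ℝ) ≤ p+1-x by linarith [hx.2]) (show (0:ℝ) ≤ x-p by linarith [hx.1]) (by ring)
    have hx' : (p + 1 - x) • p + (x - p) • (p + 1) = x := by
      simp only [smul_eq_mul]; ring
    rw [hx'] at h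
    simp only [smul_eq_mul] at h
    nlinarith [h]
  have hInt2 : IntervalIntegrable (fun x => ff t p + (ff t (p+1) - ff t p) * (x - p))
      MeasureTheory.volume p (p+1) := by
    apply ContinuousOn.intervalIntegrable
    fun_prop
  have hmono := intervalIntegral.integral_mono_on (by linarith : p ≤ p + 1)
    hcont.intervalIntegrable hInt2 hchord
  refine hmono.trans ?_
  have hI : ∫ x in p..(p+1), (x - p) = 1/2 := by
    rw [intervalIntegral.integral_comp_sub_right (fun x => x) p]
    simp [integral_id]
  have : ∫ x in p..(p+1), (ff t p + (ff t (p+1) - ff t p) * (x - p)) =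
      ff t p + (ff t (p+1) - ff t p) * (1/2) := by
    rw [intervalIntegral.integral_add (intervalIntegrable_const) (by
      apply ContinuousOn.intervalIntegrable; fun_prop)]
    rw [intervalIntegral.integral_const]
    rw [intervalIntegral.integral_const_mul, hI]
    simp
  rw [this]; linarith

lemma sum_lower {t σ : ℝ} (ht : 0 < t) (hσ : 0 < σ) (n : ℕ) :
    FF t (σ + n) - FF t σ + (ff t σ)/2 + (ff t (σ + n))/2 ≤
      ∑ j ∈ Finset.range (n+1), ff t (σ + j) := by
  induction n with
  | zero => simp
  | succ n ih =>
    rw [Finset.sum_range_succ]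
    have hp : (0:ℝ) < σ + n := by positivity
    have h := trap ht hp
    push_cast
    have hcast : σ + ((n:ℝ)+1) = (σ + n) + 1 := by ring
    rw [hcast]
    linarith [h]

lemma prod_eq_exp {t σ : ℝ} (hσ : 0 < σ) (n : ℕ) :
    ∏ j ∈ Finset.range (n+1), ((σ + j)^2 / ((σ + j)^2 + t^2)) =
      Real.exp (-∑ j ∈ Finset.range (n+1), ff t (σ + j)) := by
  rw [← Finset.sum_neg_distrib, Real.exp_sum]
  apply Finset.prod_congr rfl
  intro j _
  have hj : (0:ℝ) < σ + j := by positivity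
  have h1 : (0:ℝ) < (σ+j)^2 := by positivity
  have h2 : (0:ℝ) < (σ+j)^2 + t^2 := by positivity
  rw [show -ff t (σ+j) = 2 * Real.log (σ+j) - Real.log ((σ+j)^2 + t^2) by unfold ff; ring]
  rw [Real.exp_sub, Real.exp_log h2,
    show 2 * Real.log (σ+j) = Real.log ((σ+j)^2) by rw [Real.log_pow]; push_cast; ring,
    Real.exp_log h1]

lemma gamma_ratio (s : ℂ) (hre : 0 < s.re) {n : ℕ} (hn : n ≠ 0) :
    ((∏ j ∈ Finset.range (n+1), ((s.re + j)^2 / ((s.re + j)^2 + s.im^2)) : ℝ) : ℂ)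
    = Complex.GammaSeq s n * Complex.GammaSeq (conj s) n /
        (Complex.GammaSeq (s.re : ℂ) n)^2 := by
  set σ := s.re with hσdef
  have hns : (n:ℂ) ≠ 0 := Nat.cast_ne_zero.mpr hn
  have hre' : ∀ (z : ℂ), 0 < z.re → ∀ j : ℕ, z + j ≠ 0 := by
    intro z hz j h
    have : (z + j).re = 0 := by rw [h]; simp
    simp only [Complex.add_re, Complex.natCast_re] at this
    have : (0:ℝ) < z.re + j := by positivity
    linarith
  have hPne : (∏ j ∈ Finset.range (n+1), (s + j)) ≠ 0 :=
    Finset.prod_ne_zero_iff.mpr (fun j _ => hre' s hre j)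
  have hP'ne : (∏ j ∈ Finset.range (n+1), (conj s + j)) ≠ 0 :=
    Finset.prod_ne_zero_iff.mpr (fun j _ => hre' _ (by simp [Complex.conj_re]; exact hre) j)
  have hQne : (∏ j ∈ Finset.range (n+1), ((σ:ℂ) + j)) ≠ 0 :=
    Finset.prod_ne_zero_iff.mpr (fun j _ => hre' _ (by simp [hre]) j)
  have hFne : ((n.factorial : ℂ)) ≠ 0 := Nat.cast_ne_zero.mpr n.factorial_ne_zero
  have hBne : (n:ℂ) ^ (σ:ℂ) ≠ 0 := by
    rw [Complex.cpow_def_of_ne_zero hns]; exact Complex.exp_ne_zero _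
  have hA : (n:ℂ)^(s:ℂ) * (n:ℂ)^(conj s) = ((n:ℂ)^(σ:ℂ))^2 := by
    rw [← Complex.cpow_add _ _ hns, sq, ← Complex.cpow_add _ _ hns]
    congr 1
    rw [Complex.add_conj]
    push_cast
    ring
  have key : ∀ j:ℕ, (s + j) * (conj s + j) = (((σ + j)^2 + s.im^2 : ℝ) : ℂ) := by
    intro j
    have h1 : conj s + (j:ℂ) = conj (s + j) := by rw [map_add]; simp
    rw [h1, Complex.mul_conj, Complex.normSq_apply]
    simp only [Complex.add_re, Complex.add_im, Complex.natCast_re, Complex.natCast_im, add_zero]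
    push_cast
    ring
  have hProd : (∏ j ∈ Finset.range (n+1), (s + j)) * (∏ j ∈ Finset.range (n+1), (conj s + j))
      = ∏ j ∈ Finset.range (n+1), (((σ + j)^2 + s.im^2 : ℝ) : ℂ) := by
    rw [← Finset.prod_mul_distrib]; exact Finset.prod_congr rfl (fun j _ => key j)
  have hQ : (∏ j ∈ Finset.range (n+1), ((σ:ℂ) + j))^2
      = ∏ j ∈ Finset.range (n+1), (((σ + j)^2 : ℝ) : ℂ) := by
    rw [sq, ← Finset.prod_mul_distrib]
    exact Finset.prod_congr rfl (fun j _ => by push_cast; ring)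
  have hLHS : ((∏ j ∈ Finset.range (n+1), ((σ + j)^2 / ((σ + j)^2 + s.im^2)) : ℝ) : ℂ)
      = (∏ j ∈ Finset.range (n+1), (((σ + j)^2 : ℝ):ℂ)) /
        (∏ j ∈ Finset.range (n+1), (((σ + j)^2 + s.im^2 : ℝ):ℂ)) := by
    push_cast
    rw [Finset.prod_div_distrib]
  have hX : ((n:ℂ)^s * (n.factorial:ℂ)) * ((n:ℂ)^(conj s) * (n.factorial:ℂ)) /
      (((n:ℂ)^(σ:ℂ)) * (n.factorial:ℂ))^2 = 1 := by
    rw [mul_mul_mul_comm, hA, mul_pow, sq ((n.factorial:ℂ))]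
    field_simp
  rw [hLHS, ← hQ, ← hProd, Complex.GammaSeq, Complex.GammaSeq, Complex.GammaSeq]
  rw [div_mul_div_comm, div_pow, div_div_div_comm, hX, one_div_div]

lemma norm_gamma_sq_le_prod (s : ℂ) (hre : 0 < s.re) (n : ℕ) :
    ‖Complex.Gamma s‖^2 ≤ (Real.Gamma s.re)^2 *
      ∏ j ∈ Finset.range (n+1), ((s.re + j)^2 / ((s.re + j)^2 + s.im^2)) := by
  set σ := s.re with hσdef
  have hΓσ : 0 < Real.Gamma σ := Real.Gamma_pos_of_pos hre
  set q : ℕ → ℝ := fun m => ∏ j ∈ Finset.range (m+1), ((σ + j)^2 / ((σ + j)^2 + s.im^2))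
    with hq
  have hfac : ∀ m : ℕ, 0 ≤ (σ + m)^2 / ((σ + m)^2 + s.im^2) ∧
      (σ + m)^2 / ((σ + m)^2 + s.im^2) ≤ 1 := by
    intro m
    have h1 : (0:ℝ) < σ + m := by positivity
    have h2 : (0:ℝ) < (σ + m)^2 + s.im^2 := by positivity
    constructor
    · positivity
    · rw [div_le_one h2]; nlinarith [sq_nonneg s.im]
  have hqnn : ∀ m, 0 ≤ q m := fun m => Finset.prod_nonneg (fun j _ => (hfac j).1)
  have hanti : Antitone q := by
    apply antitone_nat_of_succ_le
    intro m
    have : q (m+1) = q m * ((σ + ((m+1:ℕ):ℝ))^2 / ((σ + ((m+1:ℕ):ℝ))^2 + s.im^2)) := by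
      simp only [hq]
      rw [Finset.prod_range_succ]
    rw [this]
    exact mul_le_of_le_one_right (hqnn m) (hfac (m+1)).2
  -- the limit
  have hGne : (Complex.Gamma (σ:ℂ))^2 ≠ 0 := by
    rw [Complex.Gamma_ofReal]
    exact pow_ne_zero 2 (by exact_mod_cast hΓσ.ne')
  have hc : Tendsto (fun m => Complex.GammaSeq s m * Complex.GammaSeq (conj s) m /
      (Complex.GammaSeq (σ:ℂ) m)^2) atTop
      (𝓝 (Complex.Gamma s * Complex.Gamma (conj s) / (Complex.Gamma (σ:ℂ))^2)) := by
    exact ((Complex.GammaSeq_tendsto_Gamma s).mul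
      (Complex.GammaSeq_tendsto_Gamma (conj s))).div
      ((Complex.GammaSeq_tendsto_Gamma _).pow 2) hGne
  have hval : Complex.Gamma s * Complex.Gamma (conj s) / (Complex.Gamma (σ:ℂ))^2
      = ((‖Complex.Gamma s‖^2 / (Real.Gamma σ)^2 : ℝ) : ℂ) := by
    rw [Complex.Gamma_conj, Complex.mul_conj, Complex.Gamma_ofReal]
    rw [Complex.normSq_eq_norm_sq]
    push_cast
    rfl
  have hq2 : Tendsto q atTop (𝓝 (‖Complex.Gamma s‖^2 / (Real.Gamma σ)^2)) := by
    have hre2 := (Complex.continuous_re.tendsto _).comp hc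
    have : Tendsto (fun m => (Complex.GammaSeq s m * Complex.GammaSeq (conj s) m /
        (Complex.GammaSeq (σ:ℂ) m)^2).re) atTop (𝓝 (‖Complex.Gamma s‖^2 / (Real.Gamma σ)^2)) := by
      rw [hval, Complex.ofReal_re] at hre2
      exact hre2
    refine Tendsto.congr' ?_ this
    filter_upwards [eventually_ge_atTop 1] with m hm
    rw [← gamma_ratio s hre (Nat.one_le_iff_ne_zero.mp hm), Complex.ofReal_re]
  have hle : ‖Complex.Gamma s‖^2 / (Real.Gamma σ)^2 ≤ q n := by
    refine le_of_tendsto hq2 ?_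
    filter_upwards [eventually_ge_atTop n] with m hm
    exact hanti hm
  calc ‖Complex.Gamma s‖^2 = (Real.Gamma σ)^2 * (‖Complex.Gamma s‖^2 / (Real.Gamma σ)^2) := by
        field_simp
    _ ≤ (Real.Gamma σ)^2 * q n := by
        exact mul_le_mul_of_nonneg_left hle (by positivity)

lemma my_arctan_le_self {x : ℝ} (hx : 0 ≤ x) : Real.arctan x ≤ x := by
  rcases eq_or_lt_of_le hx with h | h
  · simp [← h]
  · have h1 : 0 < Real.arctan x := by
      rw [← Real.arctan_zero]
      exact Real.arctan_strictMono h
    have h2 := Real.arctan_lt_pi_div_two x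
    have := lt_tan h1 h2
    rw [Real.tan_arctan] at this
    linarith

lemma FF_ge {t x : ℝ} (ht : 1 ≤ t) (hx : 0 < x) (hx2 : 2*t^2 ≤ x) :
    Real.pi * t - 1 ≤ FF t x := by
  have ht0 : 0 < t := lt_of_lt_of_le one_pos ht
  have hxt : 0 < x / t := by positivity
  have h1 : Real.pi/2 - Real.arctan (x/t) = Real.arctan ((x/t)⁻¹) :=
    (Real.arctan_inv_of_pos hxt).symm
  have h2 : Real.arctan ((x/t)⁻¹) ≤ (x/t)⁻¹ := my_arctan_le_self (by positivity)
  have h3 : (x/t)⁻¹ ≤ 1/(2*t) := by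
    rw [inv_div]
    rw [div_le_div_iff₀ hx (by positivity)]
    nlinarith
  have h4 : x * (Real.log (x^2 + t^2) - 2 * Real.log x) ≥ 0 :=
    mul_nonneg hx.le (ff_nonneg hx)
  have h5 : 2 * t * Real.arctan (x/t) ≥ 2 * t * (Real.pi/2 - 1/(2*t)) := by
    have : Real.arctan (x/t) ≥ Real.pi/2 - 1/(2*t) := by linarith
    nlinarith
  have h6 : 2 * t * (Real.pi/2 - 1/(2*t)) = Real.pi * t - 1 := by
    field_simp
  unfold FF
  nlinarith
lemma FF_le {t σ : ℝ} (ht : 0 < t) (hσ : 0 < σ) : FF t σ ≤ σ * ff t σ + 2*σ := by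
  have h1 : Real.arctan (σ/t) ≤ σ/t := my_arctan_le_self (by positivity)
  have h2 : 2 * t * Real.arctan (σ/t) ≤ 2*σ := by
    calc 2 * t * Real.arctan (σ/t) ≤ 2 * t * (σ/t) := by nlinarith
    _ = 2*σ := by field_simp
  unfold FF ff
  nlinarith

lemma my_norm_cos_le (z : ℂ) : ‖Complex.cos z‖ ≤ Real.exp |z.im| := by
  rw [Complex.cos]
  have h1 : ‖Complex.exp (z * I)‖ ≤ Real.exp |z.im| := by
    rw [Complex.norm_exp]
    apply Real.exp_le_exp.mpr
    have : (z * I).re = -z.im := by simp [Complex.mul_re]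
    rw [this]
    exact neg_le_abs _
  have h2 : ‖Complex.exp (-z * I)‖ ≤ Real.exp |z.im| := by
    rw [Complex.norm_exp]
    apply Real.exp_le_exp.mpr
    have : (-z * I).re = z.im := by simp [Complex.mul_re]
    rw [this]
    exact le_abs_self _
  calc ‖(Complex.exp (z * I) + Complex.exp (-z * I)) / 2‖
      = ‖Complex.exp (z * I) + Complex.exp (-z * I)‖ / 2 := by
        rw [norm_div]; norm_num
    _ ≤ (‖Complex.exp (z * I)‖ + ‖Complex.exp (-z * I)‖) / 2 := by
        gcongr; exact norm_add_le _ _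
    _ ≤ (Real.exp |z.im| + Real.exp |z.im|) / 2 := by gcongr
    _ = Real.exp |z.im| := by ring

/-- for all `0 < a ≤ b` there is `C > 0` such that
`|Γ(s) cos(πs/2)| ≤ C |s|^{Re(s) − 1/2}` for all `s` with `a ≤ Re(s) ≤ b` and `|Im(s)| ≥ 1`. -/
theorem gamma_cos_bound (a b : ℝ) (ha : 0 < a) (hab : a ≤ b) :
    ∃ C : ℝ, 0 < C ∧ ∀ s : ℂ, a ≤ s.re → s.re ≤ b → 1 ≤ |s.im| →
      ‖Complex.Gamma s * Complex.cos (Real.pi * s / 2)‖ ≤ C * ‖s‖ ^ (s.re - 1 / 2) := by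
  set M : ℝ := max (Real.Gamma a) (Real.Gamma b) + 1 with hM
  have hMpos : 0 < M := by
    have := Real.Gamma_pos_of_pos ha
    have : 0 < max (Real.Gamma a) (Real.Gamma b) := lt_of_lt_of_le this (le_max_left _ _)
    linarith
  refine ⟨M * Real.exp ((b+1)*(|Real.log a| + |Real.log b|) + b + 1), by positivity, ?_⟩
  intro s hsa hsb him
  set σ := s.re with hσdef
  set t := |s.im| with htdef
  have hσ0 : 0 < σ := lt_of_lt_of_le ha hsa
  have ht0 : 0 < t := lt_of_lt_of_le one_pos him
  have hs0 : 1 ≤ ‖s‖ := le_trans him (Complex.abs_im_le_norm s)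
  have hns : (0:ℝ) < ‖s‖ := lt_of_lt_of_le one_pos hs0
  -- step 1-5 : bound on ‖Γ s‖²
  set n : ℕ := Nat.ceil (2*t^2) with hn
  have hge : 2*t^2 ≤ σ + n := by
    have := Nat.le_ceil (2*t^2)
    linarith
  have h1 := norm_gamma_sq_le_prod s (by rw [← hσdef]; exact hσ0) n
  have hP : ∏ j ∈ Finset.range (n+1), ((s.re + j)^2 / ((s.re + j)^2 + s.im^2)) =
      Real.exp (-∑ j ∈ Finset.range (n+1), ff t (σ + j)) := by
    rw [← prod_eq_exp hσ0 n]
    apply Finset.prod_congr rfl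
    intro j _
    rw [_root_.sq_abs]
  rw [hP] at h1
  have hsum := sum_lower ht0 hσ0 n
  have hffn : 0 ≤ ff t (σ + n) := ff_nonneg (by positivity)
  have hFFn := FF_ge him (by positivity : (0:ℝ) < σ + n) hge
  have hFFσ := FF_le ht0 hσ0
  have hS : Real.pi * t - 1 - σ * ff t σ - 2*σ + (ff t σ)/2 ≤
      ∑ j ∈ Finset.range (n+1), ff t (σ + j) := by linarith
  have h2 : ‖Complex.Gamma s‖^2 ≤ (Real.Gamma σ)^2 *
      Real.exp ((σ - 1/2) * ff t σ + 2*σ + 1 - Real.pi * t) := by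
    refine h1.trans ?_
    have : Real.exp (-∑ j ∈ Finset.range (n+1), ff t (σ + j)) ≤
        Real.exp ((σ - 1/2) * ff t σ + 2*σ + 1 - Real.pi * t) := by
      apply Real.exp_le_exp.mpr
      nlinarith [hS]
    have hg : 0 ≤ (Real.Gamma σ)^2 := sq_nonneg _
    exact mul_le_mul_of_nonneg_left this hg
  -- rewrite ff t σ
  have hffσ : ff t σ = 2 * Real.log ‖s‖ - 2 * Real.log σ := by
    have habs : σ^2 + t^2 = ‖s‖^2 := by
      rw [htdef, _root_.sq_abs, Complex.sq_norm, Complex.normSq_apply]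
      ring
    unfold ff
    rw [habs]
    have : Real.log (‖s‖^2) = 2 * Real.log ‖s‖ := by
      rw [Real.log_pow]; push_cast; ring
    rw [this]
  -- define E
  set E : ℝ := Real.Gamma σ * Real.exp ((σ - 1/2) * (Real.log ‖s‖ - Real.log σ)
      + σ + 1/2 - Real.pi * t / 2) with hE
  have hΓσ : 0 < Real.Gamma σ := Real.Gamma_pos_of_pos hσ0
  have hEpos : 0 < E := by positivity
  have hE2 : E^2 = (Real.Gamma σ)^2 *
      Real.exp ((σ - 1/2) * ff t σ + 2*σ + 1 - Real.pi * t) := by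
    rw [hE, mul_pow, ← Real.exp_nat_mul]
    rw [hffσ]
    congr 1
    push_cast
    ring
  have hΓle : ‖Complex.Gamma s‖ ≤ E := by
    rw [← hE2] at h2
    nlinarith [norm_nonneg (Complex.Gamma s), hEpos]
  -- cos bound
  have hcos : ‖Complex.cos (Real.pi * s / 2)‖ ≤ Real.exp (Real.pi * t / 2) := by
    refine (my_norm_cos_le _).trans ?_
    apply Real.exp_le_exp.mpr
    have : ((Real.pi : ℂ) * s / 2).im = Real.pi * s.im / 2 := by
      simp [Complex.div_im, Complex.mul_im]
    rw [this]
    rw [abs_div, abs_mul, abs_of_pos Real.pi_pos]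
    simp [htdef]
  -- assemble
  have key : ‖Complex.Gamma s * Complex.cos (Real.pi * s / 2)‖ ≤
      Real.Gamma σ * Real.exp ((σ - 1/2) * (Real.log ‖s‖ - Real.log σ) + σ + 1/2) := by
    rw [norm_mul]
    calc ‖Complex.Gamma s‖ * ‖Complex.cos (Real.pi * s / 2)‖
        ≤ E * Real.exp (Real.pi * t / 2) :=
          mul_le_mul hΓle hcos (norm_nonneg _) hEpos.le
      _ = Real.Gamma σ * Real.exp ((σ - 1/2) * (Real.log ‖s‖ - Real.log σ) + σ + 1/2) := by
          rw [hE, mul_assoc, ← Real.exp_add]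
          ring_nf
  refine key.trans ?_
  -- final constant comparison
  have hrpow : ‖s‖ ^ (σ - 1/2) = Real.exp ((σ - 1/2) * Real.log ‖s‖) := by
    rw [Real.rpow_def_of_pos hns, mul_comm]
  have hlogσ : |Real.log σ| ≤ |Real.log a| + |Real.log b| := by
    have hla : Real.log a ≤ Real.log σ := Real.log_le_log ha hsa
    have hlb : Real.log σ ≤ Real.log b := Real.log_le_log hσ0 hsb
    rw [abs_le]
    constructor
    · have := neg_abs_le (Real.log a)
      linarith [abs_nonneg (Real.log b)]
    · have := le_abs_self (Real.log b)
      linarith [abs_nonneg (Real.log a)]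
  have hexp : (σ - 1/2) * (Real.log ‖s‖ - Real.log σ) + σ + 1/2 ≤
      (σ - 1/2) * Real.log ‖s‖ + ((b+1)*(|Real.log a| + |Real.log b|) + b + 1) := by
    have h1 : -((σ - 1/2) * Real.log σ) ≤ (b+1)*(|Real.log a| + |Real.log b|) := by
      have habs : |(σ - 1/2) * Real.log σ| ≤ (b+1)*(|Real.log a| + |Real.log b|) := by
        rw [abs_mul]
        have h2 : |σ - 1/2| ≤ b + 1 := by
          rw [abs_le]
          constructor <;> linarith
        exact mul_le_mul h2 hlogσ (abs_nonneg _) (by linarith)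
      linarith [neg_abs_le ((σ - 1/2) * Real.log σ)]
    have expand : (σ - 1/2) * (Real.log ‖s‖ - Real.log σ)
        = (σ - 1/2) * Real.log ‖s‖ - (σ - 1/2) * Real.log σ := by ring
    linarith
  have hΓmax : Real.Gamma σ ≤ M := by
    have hseg : σ ∈ segment ℝ a b := by
      rw [segment_eq_Icc hab]; exact ⟨hsa, hsb⟩
    have h9 : Real.Gamma σ ≤ max (Real.Gamma a) (Real.Gamma b) :=
      Real.convexOn_Gamma.le_on_segment (Set.mem_Ioi.mpr ha)
        (Set.mem_Ioi.mpr (lt_of_lt_of_le ha hab)) hseg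
    rw [hM]
    linarith
  have hfin : Real.Gamma σ * Real.exp ((σ - 1/2) * (Real.log ‖s‖ - Real.log σ) + σ + 1/2)
      ≤ M * Real.exp ((σ - 1/2) * Real.log ‖s‖ + ((b+1)*(|Real.log a| + |Real.log b|) + b + 1)) :=
    mul_le_mul hΓmax (Real.exp_le_exp.mpr hexp) (Real.exp_pos _).le hMpos.le
  refine hfin.trans (le_of_eq ?_)
  rw [hrpow, mul_assoc, ← Real.exp_add]
  ring_nf

end
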